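/- Let p : (0,1) → [1,∞) be nondecreasing with p(1) < ∞ and p(0⁺) > 1, and suppose there exist ε > 0 and C > 0 such that t₂^{-1/p'(t₂)+ε} ≤ C t₁^{-1/p'(t₁)+ε} for 0 < t₁ ≤ t₂ < 1. Then there is C₂ > 0 such that ‖x^{-1}‖_{L^{p(·)}(a,1)} ≤ C₂ a^{-1/p'(a)} for all a ∈ (0,1). -/

import Mathlib

open MeasureTheory Set Real

/-- The Luxemburg norm of `f` in the variable exponent space `L^{p(·)}(s)`. -/
noncomputable def luxNorm (p f : ℝ → ℝ) (s : Set ℝ) : ℝ :=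
  sInf {l : ℝ | 0 < l ∧ ∫ x in s, |f x / l| ^ p x ≤ 1}

/-- Implication 3)→5) of Theorem 2.2: almost decreasingness of
`x^{-1/p'(x)+ε}` implies the norm condition on `x⁻¹`. -/
theorem stmt_16 (p : ℝ → ℝ) (C ε : ℝ)
    (hmono : MonotoneOn p (Set.Ioc 0 1))
    (hp1 : ∀ x ∈ Set.Ioc (0:ℝ) 1, 1 ≤ p x)
    (hp0 : 1 < sInf (p '' Set.Ioo 0 1))
    (hC : 0 < C) (hε : 0 < ε)
    (had : ∀ t₁ t₂ : ℝ, 0 < t₁ → t₁ ≤ t₂ → t₂ < 1 →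
      t₂ ^ (-(1 - 1 / p t₂) + ε) ≤ C * t₁ ^ (-(1 - 1 / p t₁) + ε)) :
    ∃ C₂ > 0, ∀ a ∈ Set.Ioo (0:ℝ) 1,
      luxNorm p (fun x => 1 / x) (Set.Ioo a 1) ≤ C₂ * a ^ (-(1 - 1 / p a)) := by
  have hC₂pos : 0 < C * (1 + ε⁻¹) := by positivity
  refine ⟨C * (1 + ε⁻¹), hC₂pos, ?_⟩
  set C₂ := C * (1 + ε⁻¹) with hC₂def
  intro a ha
  obtain ⟨ha0, ha1⟩ := ha
  set lam := C₂ * a ^ (-(1 - 1 / p a)) with hlamdef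
  have hapow : (0:ℝ) < a ^ (-(1 - 1 / p a)) := rpow_pos_of_pos ha0 _
  have hlampos : 0 < lam := mul_pos hC₂pos hapow
  have hCC₂ : C ≤ C₂ := by
    rw [hC₂def]
    nlinarith [inv_pos.mpr hε]
  have hCC₂1 : C / C₂ ≤ 1 := (div_le_one hC₂pos).mpr hCC₂
  have hCC₂pos : 0 < C / C₂ := div_pos hC hC₂pos
  -- the comparison function
  set g : ℝ → ℝ := fun x => (C / C₂) * a ^ ε * x ^ (-(1 + ε)) with hgdef
  -- pointwise bound on `Ioo a 1`
  have hpt : ∀ x ∈ Ioo a 1, |(1:ℝ) / x / lam| ^ p x ≤ g x := by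
    intro x hx
    obtain ⟨hax, hx1⟩ := hx
    have hx0 : 0 < x := lt_trans ha0 hax
    have hpx1 : 1 ≤ p x := hp1 x ⟨hx0, hx1.le⟩
    have hpx0 : 0 < p x := lt_of_lt_of_le one_pos hpx1
    -- key inequality from the almost-decreasing hypothesis
    have hkey := had a x ha0 hax.le hx1
    -- `B` is the intermediate bound
    set B : ℝ := (C / C₂) * (a / x) ^ ε * x ^ (-(1 / p x)) with hBdef
    have haxpos : (0:ℝ) < (a / x) ^ ε := rpow_pos_of_pos (div_pos ha0 hx0) ε
    have hxppos : (0:ℝ) < x ^ (-(1 / p x)) := rpow_pos_of_pos hx0 _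
    have hBpos : 0 < B := by positivity
    have hbase : |(1:ℝ) / x / lam| = 1 / (x * lam) := by
      rw [abs_of_pos (by positivity)]
      field_simp
    have hB : 1 / (x * lam) ≤ B := by
      rw [div_le_iff₀ (by positivity)]
      have hxe : (0:ℝ) < x ^ (-(1 - 1 / p x) + ε) := rpow_pos_of_pos hx0 _
      have hX : x * x ^ (-(1 / p x)) = (x ^ (-(1 - 1 / p x)))⁻¹ := by
        have h2 : (x ^ (-(1 - 1 / p x)))⁻¹ = x ^ ((1:ℝ) - 1 / p x) := by
          rw [rpow_neg hx0.le, inv_inv]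
        rw [h2]
        have h3 : x * x ^ (-(1 / p x)) = x ^ ((1:ℝ) + -(1 / p x)) := by
          rw [rpow_add hx0, rpow_one]
        rw [h3, sub_eq_add_neg]
      have hexpand : B * (x * lam) =
          (C * a ^ (-(1 - 1 / p a) + ε)) * (x ^ (-(1 - 1 / p x) + ε))⁻¹ := by
        rw [hBdef, hlamdef, div_rpow ha0.le hx0.le, rpow_add ha0, rpow_add hx0,
          mul_inv, ← hX]
        have hxer : (x : ℝ) ^ ε ≠ 0 := (rpow_pos_of_pos hx0 _).ne'
        field_simp
      rw [hexpand, ← div_eq_mul_inv, le_div_iff₀ hxe, one_mul]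
      exact hkey
    -- raise to the power `p x`
    have h1 : |(1:ℝ) / x / lam| ^ p x ≤ B ^ p x := by
      rw [hbase]
      exact rpow_le_rpow (by positivity) hB hpx0.le
    refine h1.trans ?_
    -- now bound `B ^ p x` by `g x`
    have hBsplit : B ^ p x =
        (C / C₂) ^ p x * ((a / x) ^ ε) ^ p x * (x ^ (-(1 / p x))) ^ p x := by
      rw [hBdef, mul_rpow (by positivity) (by positivity),
        mul_rpow (by positivity) (by positivity)]
    have hx_term : (x ^ (-(1 / p x))) ^ p x = x⁻¹ := by
      rw [← rpow_mul hx0.le, neg_mul, one_div, inv_mul_cancel₀ hpx0.ne', rpow_neg_one]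
    have hax_term : ((a / x) ^ ε) ^ p x ≤ (a / x) ^ ε := by
      rw [← rpow_mul (div_pos ha0 hx0).le]
      apply rpow_le_rpow_of_exponent_ge (div_pos ha0 hx0) ((div_le_one hx0).mpr hax.le)
      nlinarith
    have hc_term : (C / C₂) ^ p x ≤ C / C₂ := by
      calc (C / C₂) ^ p x ≤ (C / C₂) ^ (1:ℝ) :=
            rpow_le_rpow_of_exponent_ge hCC₂pos hCC₂1 hpx1
        _ = C / C₂ := rpow_one _
    have hBle : B ^ p x ≤ (C / C₂) * (a / x) ^ ε * x⁻¹ := by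
      rw [hBsplit, hx_term]
      have h2 : (C / C₂) ^ p x * ((a / x) ^ ε) ^ p x ≤ (C / C₂) * (a / x) ^ ε := by
        apply mul_le_mul hc_term hax_term (by positivity) hCC₂pos.le
      exact mul_le_mul_of_nonneg_right h2 (by positivity)
    refine hBle.trans_eq ?_
    show C / C₂ * (a / x) ^ ε * x⁻¹ = C / C₂ * a ^ ε * x ^ (-(1 + ε))
    have hxe : x ^ (-(1 + ε)) = x⁻¹ * (x ^ ε)⁻¹ := by
      rw [neg_add, rpow_add hx0, rpow_neg hx0.le, rpow_neg hx0.le, rpow_one]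
    rw [hxe, div_rpow ha0.le hx0.le, div_eq_mul_inv]
    ring
  -- measurability of the integrand
  have hsub : Ioo a 1 ⊆ Ioc (0:ℝ) 1 := fun x hx => ⟨lt_trans ha0 hx.1, hx.2.le⟩
  have hpm : AEMeasurable p (volume.restrict (Ioo a 1)) :=
    aemeasurable_restrict_of_monotoneOn measurableSet_Ioo (hmono.mono hsub)
  have hbasem : Measurable fun x : ℝ => |1 / x / lam| := by
    apply Measurable.abs
    exact (measurable_const.div measurable_id).div_const lam
  have hfm : AEMeasurable (fun x : ℝ => |1 / x / lam| ^ p x)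
      (volume.restrict (Ioo a 1)) := by
    have h1 : AEMeasurable (fun x : ℝ => Real.exp (Real.log |1 / x / lam| * p x))
        (volume.restrict (Ioo a 1)) :=
      Real.measurable_exp.comp_aemeasurable
        (((Real.measurable_log.comp hbasem).aemeasurable).mul hpm)
    refine h1.congr ?_
    filter_upwards [ae_restrict_mem measurableSet_Ioo] with x hx
    have hx0 : 0 < x := lt_trans ha0 hx.1
    have : (0:ℝ) < |1 / x / lam| := by
      rw [abs_pos]
      positivity
    rw [rpow_def_of_pos this]
  -- integrability of g
  have hgint : IntegrableOn g (Ioo a 1) := by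
    have h1 : IntervalIntegrable (fun x : ℝ => x ^ (-(1 + ε))) volume a 1 := by
      apply intervalIntegral.intervalIntegrable_rpow (Or.inr ?_)
      rw [uIcc_of_le ha1.le]
      exact fun h => lt_irrefl (0:ℝ) (lt_of_lt_of_le ha0 h.1)
    have h2 := (intervalIntegrable_iff_integrableOn_Ioo_of_le ha1.le).mp h1
    have h3 := h2.const_mul (C / C₂ * a ^ ε)
    simpa [hgdef, mul_assoc, IntegrableOn] using h3
  -- integrability of f
  have hfint : IntegrableOn (fun x : ℝ => |1 / x / lam| ^ p x) (Ioo a 1) := by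
    refine Integrable.mono' hgint hfm.aestronglyMeasurable ?_
    filter_upwards [ae_restrict_mem measurableSet_Ioo] with x hx
    rw [Real.norm_eq_abs, abs_of_nonneg (rpow_nonneg (abs_nonneg _) _)]
    exact hpt x hx
  -- the integral bound
  have hIg : ∫ x in Ioo a 1, g x ≤ 1 := by
    have h0 : ∫ x in Ioo a 1, x ^ (-(1 + ε)) =
        ((1:ℝ) ^ (-(1 + ε) + 1) - a ^ (-(1 + ε) + 1)) / (-(1 + ε) + 1) := by
      rw [← integral_Ioc_eq_integral_Ioo, ← intervalIntegral.integral_of_le ha1.le]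
      apply integral_rpow
      refine Or.inr ⟨by intro h; nlinarith, ?_⟩
      rw [uIcc_of_le ha1.le]
      exact fun h => lt_irrefl (0:ℝ) (lt_of_lt_of_le ha0 h.1)
    have hval : ∫ x in Ioo a 1, g x =
        (C / C₂ * a ^ ε) * (((1:ℝ) - a ^ (-ε)) / (-ε)) := by
      rw [hgdef]
      simp only [mul_assoc]
      rw [integral_const_mul, integral_const_mul, h0]
      norm_num
    rw [hval]
    have haee : a ^ ε * a ^ (-ε) = 1 := by
      rw [← rpow_add ha0, add_neg_cancel, rpow_zero]
    have hae1 : a ^ ε ≤ 1 := rpow_le_one ha0.le ha1.le hε.le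
    have haepos : (0:ℝ) < a ^ ε := rpow_pos_of_pos ha0 _
    have haenpos : (0:ℝ) < a ^ (-ε) := rpow_pos_of_pos ha0 _
    have e2 : a ^ ε * (a ^ (-ε) - 1) = 1 - a ^ ε := by linear_combination haee
    have hsimp : (C / C₂ * a ^ ε) * (((1:ℝ) - a ^ (-ε)) / (-ε)) =
        (C / C₂) * ((1 - a ^ ε) / ε) := by
      calc (C / C₂ * a ^ ε) * (((1:ℝ) - a ^ (-ε)) / (-ε))
          = C / C₂ * ((a ^ ε * (a ^ (-ε) - 1)) / ε) := by
            field_simp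
            ring
        _ = (C / C₂) * ((1 - a ^ ε) / ε) := by rw [e2]
    rw [hsimp]
    calc (C / C₂) * ((1 - a ^ ε) / ε) ≤ (C / C₂) * (1 / ε) := by
          gcongr
          linarith
      _ ≤ 1 := by
          have he : C / C₂ * (1 / ε) = C / (C₂ * ε) := by rw [div_mul_div_comm, mul_one]
          rw [he, div_le_one (by positivity), hC₂def]
          calc C ≤ C * ε + C := by nlinarith
            _ = C * (1 + ε⁻¹) * ε := by
                have h9 : ε⁻¹ * ε = 1 := inv_mul_cancel₀ hε.ne'
                linear_combination (-C) * h9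
  -- conclude
  unfold luxNorm
  apply csInf_le
  · exact ⟨0, fun l hl => hl.1.le⟩
  · refine ⟨hlampos, ?_⟩
    calc ∫ x in Ioo a 1, |1 / x / lam| ^ p x ≤ ∫ x in Ioo a 1, g x :=
          setIntegral_mono_on hfint hgint measurableSet_Ioo hpt
      _ ≤ 1 := hIg
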